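/- If each node of T_L^d is independently black with probability p = μ · L^{-d/2^{r-1}} for a constant μ > 0, then the probability that the even-part of at least one of a family of ⌊L^d/γ⌋ pairwise disjoint r-dimensional hyper-squares is fully black is at least 1 − exp(−μ^{2^{r-1}}/γ) − o(1); in particular black color survives in two-way r-BP with probability bounded away from 0 as L → ∞. -/

import Mathlib

open scoped Classical ENNReal
open MeasureTheory Filter

/-- Vertices of the `d`-dimensional torus with side length `L`. -/
abbrev TorusV (d L : ℕ) := Fin d → ZMod L

/-- The `d`-dimensional torus graph `T_L^d`: two nodes are adjacent iff they differ
by `±1 (mod L)` in exactly one coordinate. -/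
def torusGraph (d L : ℕ) : SimpleGraph (TorusV d L) where
  Adj v u := v ≠ u ∧ ∃ j, (u j = v j + 1 ∨ u j = v j - 1) ∧ ∀ k, k ≠ j → u k = v k
  symm := by
    constructor
    rintro v u ⟨hne, j, hj, hk⟩
    refine ⟨hne.symm, j, ?_, fun k hkj => (hk k hkj).symm⟩
    rcases hj with h | h
    · right; rw [h]; ring
    · left; rw [h]; ring
  loopless := by constructor; rintro v ⟨hne, -⟩; exact hne rfl

/-- One round of two-way `r`-bootstrap percolation on a finite graph:
a node is black in the next round iff it has at least `r` black neighbors. -/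
noncomputable def gStep {V : Type*} [Fintype V] (G : SimpleGraph V) (r : ℕ)
    (C : V → Bool) : V → Bool :=
  fun v => decide (r ≤ (Finset.univ.filter (fun u => G.Adj v u ∧ C u = true)).card)

/-- One round of (ordinary) `r`-bootstrap percolation: black nodes stay black, and a white
node becomes black iff it has at least `r` black neighbors. -/
noncomputable def bpStep {V : Type*} [Fintype V] (G : SimpleGraph V) (r : ℕ)
    (C : V → Bool) : V → Bool :=
  fun v => C v || decide (r ≤ (Finset.univ.filter (fun u => G.Adj v u ∧ C u = true)).card)

/-- One round of the majority model: each node adopts the most frequent color among its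
neighbors, keeping its own color in case of a tie. -/
noncomputable def majStep {V : Type*} [Fintype V] (G : SimpleGraph V)
    (C : V → Bool) : V → Bool :=
  fun v =>
    let b := (Finset.univ.filter (fun u => G.Adj v u ∧ C u = true)).card
    let w := (Finset.univ.filter (fun u => G.Adj v u ∧ C u = false)).card
    if w < b then true else if b < w then false else C v

/-- `S` is an `(r,c)`-robust set in two-way `r`-BP: whenever all nodes of `S` have color `c`,
they keep color `c` in all subsequent configurations. (`true` = black, `false` = white.) -/
noncomputable def isRobust {V : Type*} [Fintype V] (G : SimpleGraph V) (r : ℕ) (c : Bool)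
    (S : Finset V) : Prop :=
  ∀ C : V → Bool, (∀ v ∈ S, C v = c) → ∀ t, ∀ v ∈ S, (gStep G r)^[t] C v = c

/-- `S` is a b-eternal set in two-way `r`-BP: whenever all nodes of `S` are black, every
subsequent configuration contains at least one black node. -/
noncomputable def isBEternal {V : Type*} [Fintype V] (G : SimpleGraph V) (r : ℕ)
    (S : Finset V) : Prop :=
  ∀ C : V → Bool, (∀ v ∈ S, C v = true) → ∀ t, ∃ v, (gStep G r)^[t] C v = true

/-- The node of a hyper-square at start `i` obtained by incrementing the coordinates in `S`. -/
def hsNode {d L : ℕ} (i : TorusV d L) (S : Finset (Fin d)) : TorusV d L :=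
  fun j => if j ∈ S then i j + 1 else i j

/-- The hyper-square with starting node `i` and coordinate set `J` (an `J.card`-dimensional
hyper-square). -/
noncomputable def hyperSquare {d L : ℕ} (i : TorusV d L) (J : Finset (Fin d)) :
    Finset (TorusV d L) :=
  J.powerset.image (hsNode i)

/-- The even-part of the hyper-square: nodes differing from the start in an even number of
coordinates. -/
noncomputable def evenPart {d L : ℕ} (i : TorusV d L) (J : Finset (Fin d)) :
    Finset (TorusV d L) :=
  (J.powerset.filter (fun S => Even S.card)).image (hsNode i)

/-- The odd-part of the hyper-square: nodes differing from the start in an odd number of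
coordinates. -/
noncomputable def oddPart {d L : ℕ} (i : TorusV d L) (J : Finset (Fin d)) :
    Finset (TorusV d L) :=
  (J.powerset.filter (fun S => Odd S.card)).image (hsNode i)

/-- The hyper-rectangle of size `l 0 × ⋯ × l (d-1)` starting at node `i`. -/
noncomputable def hyperRect {d L : ℕ} [NeZero L] (i : TorusV d L) (l : Fin d → ℕ) :
    Finset (TorusV d L) :=
  Finset.univ.filter (fun v => ∀ j, ∃ m : ℕ, m ≤ l j ∧ v j = i j + (m : ZMod L))

/-- The parity of a hyper-square of the tiling: parity of the sum of the last `d - r`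
coordinates of its starting node. -/
def tpar (d L r : ℕ) (i : TorusV d L) : ℕ :=
  (∑ j ∈ Finset.univ.filter (fun j : Fin d => r ≤ (j : ℕ)), (i j).val) % 2

/-- A hyper-square of the tiling (start `i`, coordinate set = first `r` coordinates) is
occupied: its even-part is fully black if its parity is even, and its odd-part is fully
black if its parity is odd. -/
noncomputable def occupiedHS (d L r : ℕ) (i : TorusV d L) (C : TorusV d L → Bool) : Prop :=
  if tpar d L r i = 0 then
    ∀ v ∈ evenPart i (Finset.univ.filter (fun j : Fin d => (j : ℕ) < r)), C v = true
  else
    ∀ v ∈ oddPart i (Finset.univ.filter (fun j : Fin d => (j : ℕ) < r)), C v = true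

/-- The Bernoulli measure on `Bool` with success (black) probability `p` (clamped to `1`). -/
noncomputable def bernoulliMeasure (p : ℝ≥0∞) : Measure Bool :=
  (PMF.bernoulli (min p 1).toNNReal
    (le_trans (ENNReal.toNNReal_mono ENNReal.one_ne_top (min_le_right p 1))
      (le_of_eq ENNReal.toNNReal_one))).toMeasure

/-- The product measure on configurations: each node is independently black with
probability `p`. -/
noncomputable def productMeasure (V : Type*) [Fintype V] (p : ℝ≥0∞) :
    Measure (V → Bool) :=
  Measure.pi (fun _ : V => bernoulliMeasure p)

namespace Aux

variable {V : Type*} [Fintype V] (p : ℝ≥0∞)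

/-- weight -/
noncomputable def w (q : ℝ≥0∞) (b : Bool) : ℝ≥0∞ := bif b then q else 1 - q

lemma w_true (q : ℝ≥0∞) : w q true = q := rfl
lemma w_false (q : ℝ≥0∞) : w q false = 1 - q := rfl

lemma sum_w (q : ℝ≥0∞) (hq : q ≤ 1) : ∑ b : Bool, w q b = 1 := by
  simp only [Fintype.sum_bool, w_true, w_false]
  exact add_tsub_cancel_of_le hq

lemma bern_singleton (b : Bool) : bernoulliMeasure p {b} = w (min p 1) b := by
  rw [bernoulliMeasure, PMF.toMeasure_apply_singleton _ _ (measurableSet_singleton b),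
    PMF.bernoulli_apply]
  have hne : min p 1 ≠ ⊤ := ne_top_of_le_ne_top ENNReal.one_ne_top (min_le_right _ _)
  cases b
  · show ((1 - (min p 1).toNNReal : NNReal) : ℝ≥0∞) = 1 - min p 1
    rw [ENNReal.coe_sub, ENNReal.coe_one, ENNReal.coe_toNNReal hne]
  · show (((min p 1).toNNReal : NNReal) : ℝ≥0∞) = min p 1
    exact ENNReal.coe_toNNReal hne

instance : IsProbabilityMeasure (bernoulliMeasure p) := by
  unfold bernoulliMeasure; infer_instance

instance : IsProbabilityMeasure (productMeasure V p) := by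
  unfold productMeasure; infer_instance

lemma meas_singleton (C : V → Bool) :
    productMeasure V p {C} = ∏ v, w (min p 1) (C v) := by
  have h : {C} = Set.univ.pi (fun v => ({C v} : Set Bool)) := by
    ext D; simp [Set.mem_pi, funext_iff, eq_comm]
  rw [productMeasure, h, Measure.pi_pi]
  simp [bern_singleton]

lemma meas_eq_sum (S : Set (V → Bool)) :
    productMeasure V p S
      = ∑ C ∈ Finset.univ.filter (· ∈ S), ∏ v, w (min p 1) (C v) := by
  have h : S = ⋃ C ∈ Finset.univ.filter (· ∈ S), ({C} : Set (V → Bool)) := by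
    ext D; simp
  conv_lhs => rw [h]
  rw [measure_biUnion_finset]
  · exact Finset.sum_congr rfl fun C _ => meas_singleton p C
  · intro a _ b _ hab
    simp [Set.disjoint_singleton_left, hab]
  · intro b _; exact measurableSet_singleton b

/-- `S` depends only on coordinates in `B`. -/
def Local (B : Finset V) (S : Set (V → Bool)) : Prop :=
  ∀ C C' : V → Bool, (∀ v ∈ B, C v = C' v) → C ∈ S → C' ∈ S

omit [Fintype V] in
lemma Local.mono {B B' : Finset V} {S : Set (V → Bool)} (h : B ⊆ B')
    (hS : Local B S) : Local B' S :=
  fun C C' hagree => hS C C' (fun v hv => hagree v (h hv))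

lemma sum_prod_w (X : Type*) [Fintype X] {q : ℝ≥0∞} (hq : q ≤ 1) :
    ∑ g : X → Bool, ∏ x : X, w q (g x) = 1 := by
  classical
  rw [← Fintype.piFinset_univ, ← Finset.prod_univ_sum (fun _ => Finset.univ) (fun _ b => w q b)]
  have h1 : ∑ b ∈ (Finset.univ : Finset Bool), w q b = 1 := sum_w _ hq
  rw [Finset.prod_congr rfl fun x _ => h1, Finset.prod_const_one]

lemma meas_eq_sum' (S : Set (V → Bool)) :
    productMeasure V p S
      = ∑ C : V → Bool, if C ∈ S then ∏ v, w (min p 1) (C v) else 0 := by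
  rw [meas_eq_sum, Finset.sum_filter]

lemma ind (B : Finset V) {S T : Set (V → Bool)} (hS : Local B S)
    (hT : Local (Finset.univ \ B) T) :
    productMeasure V p (S ∩ T) = productMeasure V p S * productMeasure V p T := by
  classical
  set q := min p 1 with hqdef
  have hq : q ≤ 1 := min_le_right _ _
  set e := (Equiv.piEquivPiSubtypeProd (fun v : V => v ∈ B) (fun _ => Bool)).symm with he
  have happ : ∀ (x) (v : V), e x v = if h : v ∈ B then x.1 ⟨v,h⟩ else x.2 ⟨v,h⟩ := by
    intro x v
    rw [he, Equiv.piEquivPiSubtypeProd_symm_apply]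
  have hSmem : ∀ σ τ τ', e (σ, τ) ∈ S → e (σ, τ') ∈ S := by
    intro σ τ τ' h
    refine hS _ _ (fun v hv => ?_) h
    rw [happ, happ, dif_pos hv, dif_pos hv]
  have hTmem : ∀ σ σ' τ, e (σ, τ) ∈ T → e (σ', τ) ∈ T := by
    intro σ σ' τ h
    refine hT _ _ (fun v hv => ?_) h
    have hv' : v ∉ B := (Finset.mem_sdiff.1 hv).2
    rw [happ, happ, dif_neg hv', dif_neg hv']
  set S' : Set ({v // v ∈ B} → Bool) := {σ | e (σ, fun _ => false) ∈ S} with hS'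
  set T' : Set ({v // ¬ v ∈ B} → Bool) := {τ | e ((fun _ => false), τ) ∈ T} with hT'
  have hSiff : ∀ σ τ, (e (σ, τ) ∈ S ↔ σ ∈ S') :=
    fun σ τ => ⟨fun h => hSmem _ _ _ h, fun h => hSmem _ _ _ h⟩
  have hTiff : ∀ σ τ, (e (σ, τ) ∈ T ↔ τ ∈ T') :=
    fun σ τ => ⟨fun h => hTmem _ _ _ h, fun h => hTmem _ _ _ h⟩
  have hW : ∀ x, (∏ v, w q (e x v))
      = (∏ i : {v // v ∈ B}, w q (x.1 i)) * (∏ i : {v // ¬ v ∈ B}, w q (x.2 i)) := by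
    intro x
    rw [← Fintype.prod_subtype_mul_prod_subtype (fun v => v ∈ B) (fun v => w q (e x v))]
    congr 1
    · refine Finset.prod_congr (congrArg (fun i => @Finset.univ _ i) (Subsingleton.elim _ _))
        (fun i _ => by rw [happ, dif_pos i.2])
    · refine Finset.prod_congr (congrArg (fun i => @Finset.univ _ i) (Subsingleton.elim _ _))
        (fun i _ => by rw [happ, dif_neg i.2])
  have trans : ∀ (U : Set (V → Bool)), productMeasure V p U
      = ∑ σ : {v // v ∈ B} → Bool, ∑ τ : {v // ¬ v ∈ B} → Bool,
          (if e (σ, τ) ∈ U then (∏ i, w q (σ i)) * (∏ i, w q (τ i)) else 0) := by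
    intro U
    rw [meas_eq_sum', ← Equiv.sum_comp e (fun C => if C ∈ U then ∏ v, w q (C v) else 0),
      Fintype.sum_prod_type]
    exact Finset.sum_congr rfl fun σ _ => Finset.sum_congr rfl fun τ _ => by
      rw [hW]
  have hST : productMeasure V p (S ∩ T)
      = (∑ σ : {v // v ∈ B} → Bool, if σ ∈ S' then ∏ i, w q (σ i) else 0)
        * (∑ τ : {v // ¬ v ∈ B} → Bool, if τ ∈ T' then ∏ i, w q (τ i) else 0) := by
    rw [trans (S ∩ T), Finset.sum_mul_sum]
    refine Finset.sum_congr rfl fun σ _ => Finset.sum_congr rfl fun τ _ => ?_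
    by_cases hσ : σ ∈ S' <;> by_cases hτ : τ ∈ T' <;>
      simp [Set.mem_inter_iff, hSiff, hTiff, hσ, hτ]
  have hSonly : productMeasure V p S
      = (∑ σ : {v // v ∈ B} → Bool, if σ ∈ S' then ∏ i, w q (σ i) else 0) := by
    rw [trans S]
    refine Finset.sum_congr rfl fun σ _ => ?_
    by_cases hσ : σ ∈ S'
    · simp only [hSiff, hσ, if_true, ← Finset.mul_sum]
      have h2 : (∑ τ : { v // v ∉ B } → Bool, ∏ i : { v // v ∉ B }, w q (τ i)) = 1 := by
        convert sum_prod_w { v // v ∉ B } (q := q) hq using 2 <;>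
          exact congrArg (fun i => @Finset.univ _ i) (Subsingleton.elim _ _)
      rw [h2, mul_one]
    · simp [hSiff, hσ]
  have hTonly : productMeasure V p T
      = (∑ τ : {v // ¬ v ∈ B} → Bool, if τ ∈ T' then ∏ i, w q (τ i) else 0) := by
    rw [trans T, Finset.sum_comm]
    refine Finset.sum_congr rfl fun τ _ => ?_
    by_cases hτ : τ ∈ T'
    · simp only [hTiff, hτ, if_true, ← Finset.sum_mul]
      have h2 : (∑ σ : { v // v ∈ B } → Bool, ∏ i : { v // v ∈ B }, w q (σ i)) = 1 := by
        convert sum_prod_w { v // v ∈ B } (q := q) hq using 2 <;>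
          exact congrArg (fun i => @Finset.univ _ i) (Subsingleton.elim _ _)
      rw [h2, one_mul]
    · simp [hTiff, hτ]
  rw [hST, hSonly, hTonly]
end Aux


namespace Aux
variable {V : Type*} [Fintype V] (p : ℝ≥0∞)

lemma meas_allblack (A : Finset V) :
    productMeasure V p {C | ∀ v ∈ A, C v = true} = (min p 1) ^ A.card := by
  classical
  have h : {C : V → Bool | ∀ v ∈ A, C v = true}
      = Set.univ.pi (fun v => if v ∈ A then ({true} : Set Bool) else Set.univ) := by
    ext C
    simp only [Set.mem_setOf_eq, Set.mem_pi, Set.mem_univ, forall_true_left]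
    constructor
    · intro h v
      by_cases hv : v ∈ A
      · simp [hv, h v hv]
      · simp [hv]
    · intro h v hv
      have := h v
      simpa [hv] using this
  rw [h, productMeasure, Measure.pi_pi]
  have : ∀ v : V, bernoulliMeasure p (if v ∈ A then ({true} : Set Bool) else Set.univ)
      = if v ∈ A then (min p 1) else 1 := by
    intro v
    by_cases hv : v ∈ A
    · simp only [hv, if_true]; exact bern_singleton p true
    · rw [if_neg hv, if_neg hv]; exact measure_univ
  rw [Finset.prod_congr rfl fun v _ => this v, Finset.prod_ite_mem, Finset.univ_inter,
    Finset.prod_const]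

omit [Fintype V] in
lemma local_not_allblack (A : Finset V) :
    Local A {C : V → Bool | ¬ ∀ v ∈ A, C v = true} := by
  intro C C' hag h hc
  exact h (fun v hv => (hag v hv).symm ▸ hc v hv)

lemma meas_none_allblack {ι : Type*} (t : Finset ι) (A : ι → Finset V)
    (hdisj : ∀ a ∈ t, ∀ b ∈ t, a ≠ b → Disjoint (A a) (A b)) :
    productMeasure V p {C | ∀ a ∈ t, ¬ ∀ v ∈ A a, C v = true}
      = ∏ a ∈ t, (1 - (min p 1) ^ (A a).card) := by
  classical
  induction t using Finset.induction_on with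
  | empty => simp
  | @insert b t hb ih =>
    have hsplit : {C : V → Bool | ∀ a ∈ insert b t, ¬ ∀ v ∈ A a, C v = true}
        = {C : V → Bool | ¬ ∀ v ∈ A b, C v = true}
          ∩ {C | ∀ a ∈ t, ¬ ∀ v ∈ A a, C v = true} := by
      ext C; simp [Finset.mem_insert, or_imp, forall_and]
    rw [hsplit, ind p (A b) (local_not_allblack (A b)) ?_]
    · rw [ih (fun a ha b' hb' hne => hdisj a (Finset.mem_insert_of_mem ha) b'
        (Finset.mem_insert_of_mem hb') hne), Finset.prod_insert hb]
      congr 1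
      have hcompl : {C : V → Bool | ¬ ∀ v ∈ A b, C v = true}
          = {C : V → Bool | ∀ v ∈ A b, C v = true}ᶜ := rfl
      rw [hcompl, prob_compl_eq_one_sub (Set.to_countable _).measurableSet,
        meas_allblack]
    · -- locality of the rest off A b
      intro C C' hag h a ha hall
      refine h a ha (fun v hv => ?_)
      have hvb : v ∉ A b := by
        have := hdisj a (Finset.mem_insert_of_mem ha) b (Finset.mem_insert_self b t)
          (fun he => hb (he ▸ ha))
        exact fun hvb => (Finset.disjoint_left.1 this) hv hvb
      rw [hag v (by simp [hvb]), hall v hv]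

lemma meas_exists_allblack {ι : Type*} (t : Finset ι) (A : ι → Finset V)
    (hdisj : ∀ a ∈ t, ∀ b ∈ t, a ≠ b → Disjoint (A a) (A b)) :
    productMeasure V p {C | ∃ a ∈ t, ∀ v ∈ A a, C v = true}
      = 1 - ∏ a ∈ t, (1 - (min p 1) ^ (A a).card) := by
  have h : {C : V → Bool | ∃ a ∈ t, ∀ v ∈ A a, C v = true}
      = {C : V → Bool | ∀ a ∈ t, ¬ ∀ v ∈ A a, C v = true}ᶜ := by
    ext C; simp
  rw [h, prob_compl_eq_one_sub (Set.to_countable _).measurableSet,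
    meas_none_allblack p t A hdisj]

lemma ofReal_one_sub_le {x : ℝ} (hx : 0 ≤ x) :
    ENNReal.ofReal (1 - x) ≤ 1 - ENNReal.ofReal x := by
  rcases le_total x 1 with h | h
  · rw [← ENNReal.ofReal_one, ← ENNReal.ofReal_sub _ hx]
  · rw [ENNReal.ofReal_eq_zero.2 (by linarith)]
    exact zero_le

lemma meas_exists_ge {ι : Type*} (t : Finset ι) (A : ι → Finset V)
    (hdisj : ∀ a ∈ t, ∀ b ∈ t, a ≠ b → Disjoint (A a) (A b)) (m : ℕ)
    (hcard : ∀ a ∈ t, (A a).card ≤ m) (pr : ℝ) (h0 : 0 ≤ pr) (h1 : pr ≤ 1) :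
    productMeasure V (ENNReal.ofReal pr) {C | ∃ a ∈ t, ∀ v ∈ A a, C v = true}
      ≥ ENNReal.ofReal (1 - Real.exp (-((t.card : ℝ) * pr ^ m))) := by
  rw [meas_exists_allblack _ t A hdisj]
  have hq : min (ENNReal.ofReal pr) 1 = ENNReal.ofReal pr := by
    rw [min_eq_left]
    exact ENNReal.ofReal_le_one.2 h1
  rw [hq]
  have hprm0 : 0 ≤ pr ^ m := pow_nonneg h0 m
  have hprm1 : pr ^ m ≤ 1 := pow_le_one₀ h0 h1
  have hstep : ∀ a ∈ t, (1 - ENNReal.ofReal pr ^ (A a).card)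
      ≤ ENNReal.ofReal (Real.exp (-(pr ^ m))) := by
    intro a ha
    have h1a : ENNReal.ofReal pr ^ m ≤ ENNReal.ofReal pr ^ (A a).card :=
      pow_le_pow_of_le_one zero_le (ENNReal.ofReal_le_one.2 h1) (hcard a ha)
    calc (1 : ℝ≥0∞) - ENNReal.ofReal pr ^ (A a).card
        ≤ 1 - ENNReal.ofReal pr ^ m := tsub_le_tsub_left h1a 1
      _ = ENNReal.ofReal (1 - pr ^ m) := by
          rw [← ENNReal.ofReal_pow h0, ← ENNReal.ofReal_one,
            ← ENNReal.ofReal_sub _ (by positivity)]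
      _ ≤ ENNReal.ofReal (Real.exp (-(pr ^ m))) := by
          apply ENNReal.ofReal_le_ofReal
          have := Real.add_one_le_exp (-(pr ^ m))
          linarith
  have hprod : (∏ a ∈ t, (1 - ENNReal.ofReal pr ^ (A a).card))
      ≤ ENNReal.ofReal (Real.exp (-((t.card : ℝ) * pr ^ m))) := by
    calc (∏ a ∈ t, (1 - ENNReal.ofReal pr ^ (A a).card))
        ≤ ∏ _a ∈ t, ENNReal.ofReal (Real.exp (-(pr ^ m))) :=
          Finset.prod_le_prod' hstep
      _ = ENNReal.ofReal (Real.exp (-(pr ^ m))) ^ t.card := Finset.prod_const _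
      _ = ENNReal.ofReal (Real.exp (-(pr ^ m)) ^ t.card) :=
          (ENNReal.ofReal_pow (Real.exp_nonneg _) _).symm
      _ = ENNReal.ofReal (Real.exp (-((t.card : ℝ) * pr ^ m))) := by
          rw [← Real.exp_nat_mul]; ring_nf
  calc ENNReal.ofReal (1 - Real.exp (-((t.card : ℝ) * pr ^ m)))
      ≤ 1 - ENNReal.ofReal (Real.exp (-((t.card : ℝ) * pr ^ m))) :=
        ofReal_one_sub_le (Real.exp_nonneg _)
    _ ≤ 1 - ∏ a ∈ t, (1 - ENNReal.ofReal pr ^ (A a).card) := tsub_le_tsub_left hprod 1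

end Aux

namespace Aux2

variable {d L : ℕ}

lemma evenPart_subset (i : TorusV d L) (J : Finset (Fin d)) :
    evenPart i J ⊆ hyperSquare i J :=
  Finset.image_subset_image (Finset.filter_subset _ _)

lemma evenPart_nonempty (i : TorusV d L) (J : Finset (Fin d)) :
    (evenPart i J).Nonempty := by
  refine ⟨hsNode i ∅, Finset.mem_image_of_mem _ ?_⟩
  simp

lemma oddPart_nonempty (i : TorusV d L) (J : Finset (Fin d)) (hJ : J.Nonempty) :
    (oddPart i J).Nonempty := by
  obtain ⟨j, hj⟩ := hJ
  refine ⟨hsNode i {j}, Finset.mem_image_of_mem _ ?_⟩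
  simp [Finset.singleton_subset_iff, hj]

lemma card_evenPart_le' : True := trivial

/-- number of even subsets of a nonempty `J` is at most `2 ^ (J.card - 1)`. -/
lemma card_even_filter_le (J : Finset (Fin d)) (hJ : J.Nonempty) :
    (J.powerset.filter (fun S => Even S.card)).card ≤ 2 ^ (J.card - 1) := by
  classical
  obtain ⟨j₀, hj₀⟩ := hJ
  set E := J.powerset.filter (fun S => Even S.card) with hE
  set O := J.powerset.filter (fun S => ¬ Even S.card) with hO
  have hEO : E.card + O.card = 2 ^ J.card := by
    rw [hE, hO, Finset.card_filter_add_card_filter_not, Finset.card_powerset]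
  have hinj : E.card ≤ O.card := by
    refine Finset.card_le_card_of_injOn
      (fun S => if j₀ ∈ S then S.erase j₀ else insert j₀ S) ?_ ?_
    · intro S hS
      rw [hE, Finset.mem_coe, Finset.mem_filter, Finset.mem_powerset] at hS
      rw [hO, Finset.mem_coe, Finset.mem_filter, Finset.mem_powerset]
      by_cases hj : j₀ ∈ S
      · simp only [hj, if_true]
        refine ⟨(Finset.erase_subset _ _).trans hS.1, ?_⟩
        have hc : S.card = (S.erase j₀).card + 1 := (Finset.card_erase_add_one hj).symm
        rw [hc, Nat.even_add_one] at hS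
        exact fun h => hS.2 h
      · simp only [hj, if_false]
        refine ⟨Finset.insert_subset hj₀ hS.1, ?_⟩
        rw [Finset.card_insert_of_notMem hj, Nat.even_add_one]
        exact fun h => h hS.2
    · intro S hS T hT h
      by_cases hjS : j₀ ∈ S <;> by_cases hjT : j₀ ∈ T <;>
        simp only [hjS, hjT, if_true, if_false] at h
      · have := congrArg (insert j₀) h
        rwa [Finset.insert_erase hjS, Finset.insert_erase hjT] at this
      · have hmem := Finset.mem_insert_self j₀ T
        rw [← h] at hmem
        exact absurd hmem (Finset.notMem_erase _ _)
      · have hmem := Finset.mem_insert_self j₀ S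
        rw [h] at hmem
        exact absurd hmem (Finset.notMem_erase _ _)
      · have h1 : S = (insert j₀ S).erase j₀ := (Finset.erase_insert hjS).symm
        rw [h1, h, Finset.erase_insert hjT]
  have h2 : 2 * E.card ≤ 2 ^ J.card := by omega
  have hJ1 : 1 ≤ J.card := Finset.card_pos.2 ⟨j₀, hj₀⟩
  have : 2 ^ J.card = 2 * 2 ^ (J.card - 1) := by
    rw [← pow_succ']
    congr 1
    omega
  omega

lemma card_evenPart_le (i : TorusV d L) (J : Finset (Fin d)) (hJ : J.Nonempty) :
    (evenPart i J).card ≤ 2 ^ (J.card - 1) := by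
  unfold evenPart
  exact le_trans Finset.card_image_le (card_even_filter_le J hJ)


def flip (S : Finset (Fin d)) (j : Fin d) : Finset (Fin d) :=
  if j ∈ S then S.erase j else insert j S

lemma flip_subset {S J : Finset (Fin d)} {j : Fin d} (hS : S ⊆ J) (hj : j ∈ J) :
    flip S j ⊆ J := by
  unfold flip
  by_cases h : j ∈ S
  · rw [if_pos h]; exact (Finset.erase_subset _ _).trans hS
  · rw [if_neg h]; exact Finset.insert_subset hj hS

lemma flip_parity (S : Finset (Fin d)) (j : Fin d) :
    Even (flip S j).card ↔ ¬ Even S.card := by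
  unfold flip
  by_cases h : j ∈ S
  · rw [if_pos h]
    have hc : S.card = (S.erase j).card + 1 := (Finset.card_erase_add_one h).symm
    rw [hc, Nat.even_add_one, not_not]
  · rw [if_neg h, Finset.card_insert_of_notMem h, Nat.even_add_one]

lemma mem_flip_iff {S : Finset (Fin d)} {j k : Fin d} :
    k ∈ flip S j ↔ (if k = j then k ∉ S else k ∈ S) := by
  unfold flip
  by_cases hj : j ∈ S <;> by_cases hkj : k = j
  · subst hkj; simp [hj]
  · simp [hj, hkj, Finset.mem_erase]
  · subst hkj; simp [hj]
  · simp [hj, hkj, Finset.mem_insert]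

lemma one_ne_zero_zmod (hL : 2 ≤ L) : (1 : ZMod L) ≠ 0 := by
  haveI : Fact (1 < L) := ⟨hL⟩
  exact one_ne_zero

lemma hsNode_flip_ne (hL : 2 ≤ L) (i : TorusV d L) (S : Finset (Fin d)) (j : Fin d) :
    hsNode i (flip S j) j ≠ hsNode i S j := by
  have hone := one_ne_zero_zmod hL
  unfold hsNode
  have hjf : j ∈ flip S j ↔ j ∉ S := by rw [mem_flip_iff, if_pos rfl]
  by_cases hj : j ∈ S
  · rw [if_pos hj, if_neg (fun h => (hjf.1 h) hj)]
    intro h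
    exact hone (by linear_combination -h)
  · rw [if_pos (hjf.2 hj), if_neg hj]
    intro h
    exact hone (by linear_combination h)

lemma hsNode_flip_adj (hL : 2 ≤ L) (i : TorusV d L) (S : Finset (Fin d)) (j : Fin d) :
    (torusGraph d L).Adj (hsNode i S) (hsNode i (flip S j)) := by
  refine ⟨fun h => hsNode_flip_ne hL i S j (congrFun h j).symm, j, ?_, ?_⟩
  · unfold hsNode
    have hjf : j ∈ flip S j ↔ j ∉ S := by rw [mem_flip_iff, if_pos rfl]
    by_cases hj : j ∈ S
    · rw [if_pos hj, if_neg (fun h => (hjf.1 h) hj)]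
      right; ring
    · rw [if_pos (hjf.2 hj), if_neg hj]
      exact Or.inl rfl
  · intro k hkj
    unfold hsNode
    have : k ∈ flip S j ↔ k ∈ S := by rw [mem_flip_iff, if_neg hkj]
    by_cases hk : k ∈ S
    · rw [if_pos hk, if_pos (this.2 hk)]
    · rw [if_neg hk, if_neg (fun h => hk (this.1 h))]

lemma step_black [NeZero L] (hL : 2 ≤ L) (r : ℕ) (i : TorusV d L) (J : Finset (Fin d))
    (hJ : J.card = r) (D : TorusV d L → Bool) (S : Finset (Fin d)) (hS : S ⊆ J)
    (hopp : ∀ T, T ⊆ J → (Even T.card ↔ ¬ Even S.card) → D (hsNode i T) = true) :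
    gStep (torusGraph d L) r D (hsNode i S) = true := by
  unfold gStep
  rw [decide_eq_true_eq]
  have hsub : J.image (fun j => hsNode i (flip S j))
      ⊆ Finset.univ.filter (fun u => (torusGraph d L).Adj (hsNode i S) u ∧ D u = true) := by
    intro u hu
    obtain ⟨j, hj, rfl⟩ := Finset.mem_image.1 hu
    rw [Finset.mem_filter]
    exact ⟨Finset.mem_univ _, hsNode_flip_adj hL i S j,
      hopp _ (flip_subset hS hj) (flip_parity S j)⟩
  have hcard : (J.image (fun j => hsNode i (flip S j))).card = r := by
    rw [Finset.card_image_of_injOn, hJ]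
    intro j _ j' _ h
    by_contra hne
    have h1 := congrFun h j
    have h2 : hsNode i (flip S j') j = hsNode i S j := by
      unfold hsNode
      have : j ∈ flip S j' ↔ j ∈ S := by rw [mem_flip_iff, if_neg hne]
      by_cases hk : j ∈ S
      · rw [if_pos hk, if_pos (this.2 hk)]
      · rw [if_neg hk, if_neg (fun hh => hk (this.1 hh))]
    exact hsNode_flip_ne hL i S j (h1.trans h2)
  calc r = (J.image (fun j => hsNode i (flip S j))).card := hcard.symm
    _ ≤ _ := Finset.card_le_card hsub

lemma evenPart_beternal [NeZero L] (hL : 2 ≤ L) (r : ℕ) (hr : 1 ≤ r) (i : TorusV d L)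
    (J : Finset (Fin d)) (hJ : J.card = r)
    (C : TorusV d L → Bool) (hC : ∀ v ∈ evenPart i J, C v = true) :
    ∀ t, ∃ v, (gStep (torusGraph d L) r)^[t] C v = true := by
  have hJne : J.Nonempty := Finset.card_pos.1 (by omega)
  have key : ∀ t, (∀ v ∈ evenPart i J, (gStep (torusGraph d L) r)^[t] C v = true)
      ∨ (∀ v ∈ oddPart i J, (gStep (torusGraph d L) r)^[t] C v = true) := by
    intro t
    induction t with
    | zero => exact Or.inl hC
    | succ t ih =>
      rcases ih with h | h
      · right
        intro v hv
        obtain ⟨S, hSmem, rfl⟩ := Finset.mem_image.1 hv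
        rw [Finset.mem_filter, Finset.mem_powerset] at hSmem
        rw [Function.iterate_succ_apply']
        refine step_black hL r i J hJ _ S hSmem.1 ?_
        intro T hT hpar
        refine h _ (Finset.mem_image_of_mem _ ?_)
        rw [Finset.mem_filter, Finset.mem_powerset]
        exact ⟨hT, hpar.2 (Nat.not_even_iff_odd.2 hSmem.2)⟩
      · left
        intro v hv
        obtain ⟨S, hSmem, rfl⟩ := Finset.mem_image.1 hv
        rw [Finset.mem_filter, Finset.mem_powerset] at hSmem
        rw [Function.iterate_succ_apply']
        refine step_black hL r i J hJ _ S hSmem.1 ?_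
        intro T hT hpar
        refine h _ (Finset.mem_image_of_mem _ ?_)
        rw [Finset.mem_filter, Finset.mem_powerset]
        refine ⟨hT, Nat.not_even_iff_odd.1 (fun hT' => (hpar.1 hT') hSmem.2)⟩
  intro t
  rcases key t with h | h
  · obtain ⟨v, hv⟩ := evenPart_nonempty i J
    exact ⟨v, h v hv⟩
  · obtain ⟨v, hv⟩ := oddPart_nonempty i J hJne
    exact ⟨v, h v hv⟩

end Aux2


def J0 (d r : ℕ) : Finset (Fin d) := Finset.univ.filter (fun j => (j : ℕ) < r)

namespace Aux3

lemma card_J0 {d r : ℕ} (hrd : r ≤ d) : (J0 d r).card = r := by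
  classical
  have h : J0 d r = Finset.image (Fin.castLE hrd) Finset.univ := by
    ext j
    constructor
    · intro hj
      have hj' : (j : ℕ) < r := (Finset.mem_filter.1 hj).2
      exact Finset.mem_image.2 ⟨⟨(j : ℕ), hj'⟩, Finset.mem_univ _, Fin.ext rfl⟩
    · intro hj
      obtain ⟨i, -, rfl⟩ := Finset.mem_image.1 hj
      exact Finset.mem_filter.2 ⟨Finset.mem_univ _, i.2⟩
  rw [h, Finset.card_image_of_injective _ (Fin.castLE_injective hrd), Finset.card_univ,
    Fintype.card_fin]

def pstart (d L r : ℕ) (a : (Fin r → Fin (L / 2)) × (Fin (d - r) → ZMod L)) :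
    TorusV d L :=
  fun j => if h : (j : ℕ) < r then (((2 * ((a.1 ⟨(j : ℕ), h⟩ : Fin (L / 2)) : ℕ)) : ℕ) : ZMod L)
    else a.2 ⟨(j : ℕ) - r, by have := j.isLt; omega⟩

lemma pstart_inj {d L r : ℕ} [NeZero L] (hL : 2 ≤ L) (hrd : r ≤ d)
    {a b : (Fin r → Fin (L / 2)) × (Fin (d - r) → ZMod L)} {x : TorusV d L}
    (hxa : x ∈ evenPart (pstart d L r a) (J0 d r))
    (hxb : x ∈ evenPart (pstart d L r b) (J0 d r)) : a = b := by
  classical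
  obtain ⟨S, hS, hxS⟩ := Finset.mem_image.1 hxa
  obtain ⟨T, hT, hxT⟩ := Finset.mem_image.1 hxb
  rw [Finset.mem_filter, Finset.mem_powerset] at hS hT
  have hSJ := hS.1
  have hTJ := hT.1
  have hxx : ∀ j, hsNode (pstart d L r a) S j = hsNode (pstart d L r b) T j := by
    intro j; rw [hxS, hxT]
  have hL2 : 2 * (L / 2) ≤ L := Nat.mul_div_le L 2
  have hval : ∀ (c : (Fin r → Fin (L / 2)) × (Fin (d - r) → ZMod L))
      (U : Finset (Fin d)) (j : Fin d) (h : (j : ℕ) < r),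
      hsNode (pstart d L r c) U j
        = (((2 * ((c.1 ⟨(j : ℕ), h⟩ : Fin (L / 2)) : ℕ) + (if j ∈ U then 1 else 0)) : ℕ)
            : ZMod L) := by
    intro c U j h
    unfold hsNode pstart
    by_cases hjU : j ∈ U
    · rw [if_pos hjU, dif_pos h, if_pos hjU]
      push_cast
      ring
    · rw [if_neg hjU, dif_pos h, if_neg hjU]
      push_cast
      ring
  have hhigh : ∀ (c : (Fin r → Fin (L / 2)) × (Fin (d - r) → ZMod L))
      (U : Finset (Fin d)) (hU : U ⊆ J0 d r) (j : Fin d) (h : ¬ (j : ℕ) < r),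
      hsNode (pstart d L r c) U j = c.2 ⟨(j : ℕ) - r, by have := j.isLt; omega⟩ := by
    intro c U hU j h
    have hjU : j ∉ U := fun hj => h (by simpa [J0] using hU hj)
    unfold hsNode pstart
    rw [if_neg hjU, dif_neg h]
  refine Prod.ext ?_ ?_
  · funext i
    have hjlt : (i : ℕ) < d := lt_of_lt_of_le i.2 hrd
    have h1 := hxx ⟨(i : ℕ), hjlt⟩
    rw [hval a S ⟨(i : ℕ), hjlt⟩ i.2, hval b T ⟨(i : ℕ), hjlt⟩ i.2] at h1
    set va := ((a.1 ⟨(i : ℕ), i.2⟩ : Fin (L / 2)) : ℕ) with hva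
    set vb := ((b.1 ⟨(i : ℕ), i.2⟩ : Fin (L / 2)) : ℕ) with hvb
    set ea := (if (⟨(i : ℕ), hjlt⟩ : Fin d) ∈ S then 1 else 0) with hea
    set eb := (if (⟨(i : ℕ), hjlt⟩ : Fin d) ∈ T then 1 else 0) with heb
    have hva' : va < L / 2 := (a.1 ⟨(i : ℕ), i.2⟩).isLt
    have hvb' : vb < L / 2 := (b.1 ⟨(i : ℕ), i.2⟩).isLt
    have hea' : ea ≤ 1 := by rw [hea]; split <;> omega
    have heb' : eb ≤ 1 := by rw [heb]; split <;> omega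
    have hba : 2 * va + ea < L := by omega
    have hbb : 2 * vb + eb < L := by omega
    have h2 : 2 * va + ea = 2 * vb + eb := by
      have := congrArg ZMod.val h1
      rwa [ZMod.val_cast_of_lt hba, ZMod.val_cast_of_lt hbb] at this
    have h3 : va = vb := by omega
    exact Fin.val_injective h3
  · funext k
    have hjlt : r + (k : ℕ) < d := by have := k.isLt; omega
    have h : ¬ ((⟨r + (k : ℕ), hjlt⟩ : Fin d) : ℕ) < r := by simp
    have h1 := hxx ⟨r + (k : ℕ), hjlt⟩
    rw [hhigh a S hSJ ⟨r + (k : ℕ), hjlt⟩ h, hhigh b T hTJ ⟨r + (k : ℕ), hjlt⟩ h] at h1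
    have hk : (⟨((⟨r + (k : ℕ), hjlt⟩ : Fin d) : ℕ) - r, by have := k.isLt; omega⟩ : Fin (d - r))
        = k := by
      apply Fin.ext
      simp
    rwa [hk] at h1

lemma prm_eq (d r L : ℕ) (μ : ℝ) :
    (μ * (L : ℝ) ^ (-(d : ℝ) / 2 ^ (r - 1))) ^ (2 ^ (r - 1))
      = μ ^ 2 ^ (r - 1) * (L : ℝ) ^ (-(d : ℝ)) := by
  rw [mul_pow]
  congr 1
  rw [← Real.rpow_natCast ((L : ℝ) ^ (-(d : ℝ) / 2 ^ (r - 1))) (2 ^ (r - 1)),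
    ← Real.rpow_mul (Nat.cast_nonneg L)]
  congr 1
  push_cast
  have h2 : ((2 : ℝ) ^ (r - 1)) ≠ 0 := by positivity
  field_simp

lemma evAll (d r : ℕ) (hr : 2 ≤ r) (hrd : r ≤ d) (μ : ℝ) (ε : ℝ) (hε : 0 < ε) :
    ∀ᶠ L : ℕ in atTop, (μ * (L : ℝ) ^ (-(d : ℝ) / 2 ^ (r - 1)) ≤ 1 ∧
      Real.exp (μ ^ 2 ^ (r - 1) * (L : ℝ) ^ (-(d : ℝ))) ≤ 1 + ε ∧ 2 ≤ L) := by
  have hd : (0 : ℝ) < (d : ℝ) := by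
    have : 0 < d := by omega
    exact_mod_cast this
  have h1 : Filter.Tendsto (fun L : ℕ => μ * (L : ℝ) ^ (-(d : ℝ) / 2 ^ (r - 1))) atTop
      (nhds 0) := by
    have hpos : (0 : ℝ) < (d : ℝ) / 2 ^ (r - 1) := by positivity
    have t := (tendsto_rpow_neg_atTop hpos).comp
      (tendsto_natCast_atTop_atTop (R := ℝ))
    have t2 := t.const_mul μ
    simpa [neg_div, Function.comp] using t2
  have h2 : Filter.Tendsto (fun L : ℕ => Real.exp (μ ^ 2 ^ (r - 1) * (L : ℝ) ^ (-(d : ℝ))))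
      atTop (nhds 1) := by
    have t := ((tendsto_rpow_neg_atTop hd).comp
      (tendsto_natCast_atTop_atTop (R := ℝ))).const_mul (μ ^ 2 ^ (r - 1))
    have t2 := (Real.continuous_exp.tendsto 0).comp (by simpa [Function.comp] using t)
    simpa [Function.comp_def, Real.exp_zero] using t2
  filter_upwards [h1.eventually_lt_const one_pos,
    h2.eventually_lt_const (lt_add_of_pos_right 1 hε), Filter.eventually_ge_atTop 2]
    with L hL1 hL2 hL3
  exact ⟨hL1.le, hL2.le, hL3⟩

end Aux3

theorem stmt_12 (d r : ℕ) (hr : 2 ≤ r) (hrd : r ≤ d) (μ : ℝ) (hμ : 0 < μ) :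
    (∀ ε : ℝ, 0 < ε → ∃ L0 : ℕ, ∀ (L : ℕ) [NeZero L], L0 ≤ L →
      ∀ (starts : Fin (⌊(L : ℝ) ^ d / 2 ^ r⌋₊) → TorusV d L)
        (Js : Fin (⌊(L : ℝ) ^ d / 2 ^ r⌋₊) → Finset (Fin d)),
        (∀ a, (Js a).card = r) →
        (∀ a b, a ≠ b →
          Disjoint (hyperSquare (starts a) (Js a)) (hyperSquare (starts b) (Js b))) →
        productMeasure (TorusV d L)
            (ENNReal.ofReal (μ * (L : ℝ) ^ (-(d : ℝ) / 2 ^ (r - 1))))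
          {C | ∃ a, ∀ v ∈ evenPart (starts a) (Js a), C v = true} ≥
          ENNReal.ofReal (1 - Real.exp (-(μ ^ 2 ^ (r - 1)) / 2 ^ r) - ε)) ∧
    (∃ c : ℝ, 0 < c ∧ ∃ L0 : ℕ, ∀ (L : ℕ) [NeZero L], L0 ≤ L →
      productMeasure (TorusV d L)
          (ENNReal.ofReal (μ * (L : ℝ) ^ (-(d : ℝ) / 2 ^ (r - 1))))
        {C | ∀ t, ∃ v, (gStep (torusGraph d L) r)^[t] C v = true} ≥
        ENNReal.ofReal c) := by
  classical
  constructor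
  · -- Part 1
    intro ε hε
    obtain ⟨L0, hL0⟩ := Filter.eventually_atTop.1 (Aux3.evAll d r hr hrd μ ε hε)
    refine ⟨L0, ?_⟩
    intro L _ hL starts Js hJs hdisj
    obtain ⟨hp1, hexp, hL2⟩ := hL0 L hL
    set pr : ℝ := μ * (L : ℝ) ^ (-(d : ℝ) / 2 ^ (r - 1)) with hprdef
    have hpr0 : 0 ≤ pr := by
      have : (0 : ℝ) ≤ (L : ℝ) ^ (-(d : ℝ) / 2 ^ (r - 1)) :=
        Real.rpow_nonneg (Nat.cast_nonneg L) _
      positivity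
    set m : ℕ := 2 ^ (r - 1) with hmdef
    have hset : {C : TorusV d L → Bool | ∃ a, ∀ v ∈ evenPart (starts a) (Js a), C v = true}
        = {C : TorusV d L → Bool | ∃ a ∈ (Finset.univ : Finset (Fin ⌊(L : ℝ) ^ d / 2 ^ r⌋₊)),
            ∀ v ∈ evenPart (starts a) (Js a), C v = true} := by
      ext C; simp
    rw [hset]
    have hdisj' : ∀ a ∈ (Finset.univ : Finset (Fin ⌊(L : ℝ) ^ d / 2 ^ r⌋₊)),
        ∀ b ∈ (Finset.univ : Finset (Fin ⌊(L : ℝ) ^ d / 2 ^ r⌋₊)),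
        a ≠ b → Disjoint (evenPart (starts a) (Js a)) (evenPart (starts b) (Js b)) :=
      fun a _ b _ hab => (hdisj a b hab).mono (Aux2.evenPart_subset _ _)
        (Aux2.evenPart_subset _ _)
    have hcard' : ∀ a ∈ (Finset.univ : Finset (Fin ⌊(L : ℝ) ^ d / 2 ^ r⌋₊)),
        (evenPart (starts a) (Js a)).card ≤ m := by
      intro a _
      have hne : (Js a).Nonempty := Finset.card_pos.1 (by rw [hJs a]; omega)
      have := Aux2.card_evenPart_le (starts a) (Js a) hne
      rwa [hJs a] at this
    have hmain := Aux.meas_exists_ge (V := TorusV d L) Finset.univ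
      (fun a => evenPart (starts a) (Js a)) hdisj' m hcard' pr hpr0 hp1
    refine le_trans ?_ hmain
    apply ENNReal.ofReal_le_ofReal
    rw [Finset.card_univ, Fintype.card_fin]
    set N : ℝ := (⌊(L : ℝ) ^ d / 2 ^ r⌋₊ : ℝ) with hNdef
    -- real analysis
    have hLpos : (0 : ℝ) < (L : ℝ) := by
      have : 0 < L := by omega
      exact_mod_cast this
    have hX : (0 : ℝ) < (L : ℝ) ^ d := pow_pos hLpos d
    have hprm : pr ^ m = μ ^ m * (L : ℝ) ^ (-(d : ℝ)) := Aux3.prm_eq d r L μ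
    have hrd2 : (L : ℝ) ^ (-(d : ℝ)) = 1 / (L : ℝ) ^ d := by
      rw [Real.rpow_neg (le_of_lt hLpos), Real.rpow_natCast, one_div]
    set M : ℝ := μ ^ m with hMdef
    have hM : 0 < M := pow_pos hμ m
    have hprm2 : pr ^ m = M / (L : ℝ) ^ d := by
      rw [hprm, hrd2]; ring
    have hN1 : (L : ℝ) ^ d / 2 ^ r - 1 ≤ N := (Nat.sub_one_lt_floor _).le
    have hN0 : 0 ≤ N := Nat.cast_nonneg _
    have hkey : M / 2 ^ r - M / (L : ℝ) ^ d ≤ N * (M / (L : ℝ) ^ d) := by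
      have h := mul_le_mul_of_nonneg_right hN1 (le_of_lt (div_pos hM hX))
      calc M / 2 ^ r - M / (L : ℝ) ^ d
          = ((L : ℝ) ^ d / 2 ^ r - 1) * (M / (L : ℝ) ^ d) := by
            field_simp
        _ ≤ N * (M / (L : ℝ) ^ d) := h
    have hNp : N * pr ^ m = N * (M / (L : ℝ) ^ d) := congrArg (fun z => N * z) hprm2
    have hexpchain : Real.exp (-(N * pr ^ m)) ≤ Real.exp (-(M / 2 ^ r)) + ε := by
      have h1 : Real.exp (-(N * pr ^ m))
          ≤ Real.exp (-(M / 2 ^ r) + M / (L : ℝ) ^ d) := by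
        apply Real.exp_le_exp.2
        rw [hNp]
        linarith
      have h2 : Real.exp (-(M / 2 ^ r) + M / (L : ℝ) ^ d)
          = Real.exp (-(M / 2 ^ r)) * Real.exp (M / (L : ℝ) ^ d) := Real.exp_add _ _
      have h3 : Real.exp (M / (L : ℝ) ^ d) ≤ 1 + ε := by
        have heq : M * (L : ℝ) ^ (-(d : ℝ)) = M / (L : ℝ) ^ d := by rw [hrd2]; ring
        rwa [hMdef, hmdef, heq] at hexp
      have h4 : Real.exp (-(M / 2 ^ r)) ≤ 1 := by
        rw [← Real.exp_zero]
        apply Real.exp_le_exp.2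
        have : (0 : ℝ) < M / 2 ^ r := by positivity
        linarith
      have h5 : 0 < Real.exp (-(M / 2 ^ r)) := Real.exp_pos _
      calc Real.exp (-(N * pr ^ m))
          ≤ Real.exp (-(M / 2 ^ r)) * Real.exp (M / (L : ℝ) ^ d) := by
            rw [← h2]; exact h1
        _ ≤ Real.exp (-(M / 2 ^ r)) * (1 + ε) := by nlinarith
        _ ≤ Real.exp (-(M / 2 ^ r)) + ε := by nlinarith
    have hgoal : Real.exp (-(μ ^ 2 ^ (r - 1)) / 2 ^ r) = Real.exp (-(M / 2 ^ r)) := by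
      rw [hMdef, hmdef, neg_div]
    rw [hgoal]
    linarith
  · -- Part 2
    set m : ℕ := 2 ^ (r - 1) with hmdef
    refine ⟨1 - Real.exp (-(μ ^ m / 4 ^ r)), ?_, ?_⟩
    · have h1 : Real.exp (-(μ ^ m / 4 ^ r)) < 1 := by
        rw [← Real.exp_zero]
        apply Real.exp_lt_exp.2
        have : (0 : ℝ) < μ ^ m / 4 ^ r := by positivity
        linarith
      linarith
    obtain ⟨L0, hL0⟩ := Filter.eventually_atTop.1 (Aux3.evAll d r hr hrd μ 1 one_pos)
    refine ⟨L0, ?_⟩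
    intro L _ hL
    obtain ⟨hp1, -, hL2⟩ := hL0 L hL
    set pr : ℝ := μ * (L : ℝ) ^ (-(d : ℝ) / 2 ^ (r - 1)) with hprdef
    have hpr0 : 0 ≤ pr := by
      have : (0 : ℝ) ≤ (L : ℝ) ^ (-(d : ℝ) / 2 ^ (r - 1)) :=
        Real.rpow_nonneg (Nat.cast_nonneg L) _
      positivity
    have hJ0 : (J0 d r).card = r := Aux3.card_J0 hrd
    -- disjoint family of even parts
    set ι := (Fin r → Fin (L / 2)) × (Fin (d - r) → ZMod L) with hιdef
    set A : ι → Finset (TorusV d L) := fun a => evenPart (Aux3.pstart d L r a) (J0 d r)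
      with hAdef
    have hdisj : ∀ a ∈ (Finset.univ : Finset ι), ∀ b ∈ (Finset.univ : Finset ι),
        a ≠ b → Disjoint (A a) (A b) := by
      intro a _ b _ hab
      rw [Finset.disjoint_left]
      intro x hxa hxb
      exact hab (Aux3.pstart_inj hL2 hrd hxa hxb)
    have hcard : ∀ a ∈ (Finset.univ : Finset ι), (A a).card ≤ m := by
      intro a _
      have hne : (J0 d r).Nonempty := Finset.card_pos.1 (by omega)
      have := Aux2.card_evenPart_le (Aux3.pstart d L r a) (J0 d r) hne
      rwa [hJ0] at this
    have hmain := Aux.meas_exists_ge (V := TorusV d L) Finset.univ A hdisj m hcard pr hpr0 hp1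
    -- survival inclusion
    have hsub : {C : TorusV d L → Bool | ∃ a ∈ (Finset.univ : Finset ι),
          ∀ v ∈ A a, C v = true}
        ⊆ {C : TorusV d L → Bool | ∀ t, ∃ v, (gStep (torusGraph d L) r)^[t] C v = true} := by
      rintro C ⟨a, -, hall⟩
      exact Aux2.evenPart_beternal hL2 r (by omega) (Aux3.pstart d L r a) (J0 d r) hJ0 C hall
    refine le_trans ?_ (le_trans hmain (measure_mono hsub))
    apply ENNReal.ofReal_le_ofReal
    -- count
    have hLpos : (0 : ℝ) < (L : ℝ) := by
      have : 0 < L := by omega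
      exact_mod_cast this
    have hX : (0 : ℝ) < (L : ℝ) ^ d := pow_pos hLpos d
    have hM : 0 < μ ^ m := pow_pos hμ m
    have hprm : pr ^ m = μ ^ m * (L : ℝ) ^ (-(d : ℝ)) := Aux3.prm_eq d r L μ
    have hrd2 : (L : ℝ) ^ (-(d : ℝ)) = 1 / (L : ℝ) ^ d := by
      rw [Real.rpow_neg (le_of_lt hLpos), Real.rpow_natCast, one_div]
    have hprm2 : pr ^ m = μ ^ m / (L : ℝ) ^ d := by
      rw [hprm, hrd2]; ring
    have hcount : Fintype.card ι = (L / 2) ^ r * L ^ (d - r) := by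
      show Fintype.card ((Fin r → Fin (L / 2)) × (Fin (d - r) → ZMod L)) = _
      rw [Fintype.card_prod, Fintype.card_fun, Fintype.card_fun, Fintype.card_fin,
        Fintype.card_fin, ZMod.card, Fintype.card_fin]
    have hnat : L ^ d ≤ 4 ^ r * ((L / 2) ^ r * L ^ (d - r)) := by
      have h1 : L ≤ 4 * (L / 2) := by omega
      calc L ^ d = L ^ r * L ^ (d - r) := by
            rw [← pow_add]
            congr 1
            omega
        _ ≤ (4 * (L / 2)) ^ r * L ^ (d - r) :=
            Nat.mul_le_mul_right _ (Nat.pow_le_pow_left h1 r)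
        _ = 4 ^ r * ((L / 2) ^ r * L ^ (d - r)) := by rw [Nat.mul_pow]; ring
    have hcount2 : (L : ℝ) ^ d / 4 ^ r ≤ ((Finset.univ : Finset ι).card : ℝ) := by
      rw [Finset.card_univ, hcount]
      rw [div_le_iff₀ (by positivity : (0 : ℝ) < 4 ^ r)]
      push_cast
      have : ((L : ℝ)) ^ d ≤ 4 ^ r * (((L / 2 : ℕ) : ℝ) ^ r * (L : ℝ) ^ (d - r)) := by
        exact_mod_cast hnat
      linarith [this]
    have hkey : μ ^ m / 4 ^ r ≤ ((Finset.univ : Finset ι).card : ℝ) * pr ^ m := by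
      have h := mul_le_mul_of_nonneg_right hcount2 (le_of_lt (div_pos hM hX))
      calc μ ^ m / 4 ^ r = (L : ℝ) ^ d / 4 ^ r * (μ ^ m / (L : ℝ) ^ d) := by
            field_simp
        _ ≤ ((Finset.univ : Finset ι).card : ℝ) * (μ ^ m / (L : ℝ) ^ d) := h
        _ = ((Finset.univ : Finset ι).card : ℝ) * pr ^ m :=
            congrArg (fun z => ((Finset.univ : Finset ι).card : ℝ) * z) hprm2.symm
    have hmono : Real.exp (-(((Finset.univ : Finset ι).card : ℝ) * pr ^ m))
        ≤ Real.exp (-(μ ^ m / 4 ^ r)) := by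
      apply Real.exp_le_exp.2
      linarith
    linarith
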